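/- arXiv:1508.02946 — 2 statements merged into one kernel-verified Lean document; each statement's English description precedes it below -/
import Mathlib

section
/- Let η : (X,d) → (X',d') be an (r,β)-Hölder equivalence and let F ⊆ X be a finite subset with at least two points and no focal points. Then η(F) has no focal points and β · dim_fH(η(F)) = dim_fH(F). -/
open Metric

namespace FinDim

variable {X : Type*} [MetricSpace X]

/-- `ν_F(a)`: the distance from `a` to a nearest other point of `F`. -/
noncomputable def nu (F : Finset X) (a : X) : ℝ :=
  sInf {r : ℝ | ∃ x ∈ F, x ≠ a ∧ r = dist a x}

/-- `δ(F)`: the separation of `F`, the minimum distance between distinct points. -/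
noncomputable def sep (F : Finset X) : ℝ :=
  sInf {r : ℝ | ∃ x ∈ F, ∃ y ∈ F, x ≠ y ∧ r = dist x y}

/-- A 2-covering of `F`: a family of subsets of `F` covering `F`,
each member having at least two elements. -/
def IsTwoCover (F : Finset X) (U : Finset (Finset X)) : Prop :=
  (∀ V ∈ U, V ⊆ F) ∧ (∀ V ∈ U, 2 ≤ V.card) ∧ ∀ a ∈ F, ∃ V ∈ U, a ∈ V

/-- `Δ(𝒰)`: maximum diameter of the members of the family `𝒰`. -/
noncomputable def coverDiam (U : Finset (Finset X)) : ℝ :=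
  sSup {r : ℝ | ∃ V ∈ U, r = Metric.diam (V : Set X)}

/-- `∇(F)`: the covering diameter of `F`. -/
noncomputable def nablaF (F : Finset X) : ℝ :=
  sInf {r : ℝ | ∃ U : Finset (Finset X), IsTwoCover F U ∧ r = coverDiam U}

/-- `a` is a focal point of `F`. -/
def IsFocal (F : Finset X) (a : X) : Prop :=
  a ∈ F ∧ ∀ x ∈ F, x ≠ a → dist a x = Metric.diam (F : Set X)

/-- `H^s_𝒰(F) = Σ_{U ∈ 𝒰} Δ(U)^s`. -/
noncomputable def Hcov (U : Finset (Finset X)) (s : ℝ) : ℝ :=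
  ∑ V ∈ U, Metric.diam (V : Set X) ^ s

/-- `H^s(F)`: minimum of `H^s_𝒰(F)` over 2-coverings `𝒰` with `Δ(𝒰) = ∇(F)`. -/
noncomputable def HH (F : Finset X) (s : ℝ) : ℝ :=
  sInf {h : ℝ | ∃ U : Finset (Finset X),
    IsTwoCover F U ∧ coverDiam U = nablaF F ∧ h = Hcov U s}

/-- The finite Hausdorff dimension: the unique `s₀ ∈ (0,∞)` with
`H^{s₀}(F) = Δ(F)^{s₀}` (when `F` has no focal points). -/
noncomputable def dimfH (F : Finset X) : ℝ :=
  sInf {s : ℝ | 0 < s ∧ HH F s = Metric.diam (F : Set X) ^ s}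

/-- `T_{∇(F)}(F)`: the minimal cardinality of a 2-covering `𝒰` with `Δ(𝒰) = ∇(F)`. -/
noncomputable def Tmin (F : Finset X) : ℕ :=
  sInf {n : ℕ | ∃ U : Finset (Finset X),
    IsTwoCover F U ∧ coverDiam U = nablaF F ∧ U.card = n}

/-- The finite box dimension `dim_fB(F) = ln T_{∇(F)}(F) / ln (Δ(F)/∇(F))`. -/
noncomputable def dimfB (F : Finset X) : ℝ :=
  Real.log (Tmin F) / Real.log (Metric.diam (F : Set X) / nablaF F)

/-- `ν_A(x)` for a subset `A` of a metric space. -/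
noncomputable def nuSet {Z : Type*} [MetricSpace Z] (A : Set Z) (x : Z) : ℝ :=
  sInf {r : ℝ | ∃ y ∈ A, y ≠ x ∧ r = dist x y}

/-- `∇(A) = sup {ν_A(x) : x ∈ A}` for a subset `A` of a metric space. -/
noncomputable def nablaSet {Z : Type*} [MetricSpace Z] (A : Set Z) : ℝ :=
  sSup {r : ℝ | ∃ x ∈ A, r = nuSet A x}

end FinDim


section Aux

lemma map_csSup_fin {f : ℝ → ℝ} (hf : MonotoneOn f (Set.Ici 0)) {S : Set ℝ}
    (hS : S.Finite) (hne : S.Nonempty) (hpos : ∀ x ∈ S, (0:ℝ) ≤ x) :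
    sSup (f '' S) = f (sSup S) := by
  have hmem := hne.csSup_mem hS
  refine le_antisymm ?_ (le_csSup (hS.image f).bddAbove ⟨_, hmem, rfl⟩)
  apply csSup_le (hne.image f)
  rintro _ ⟨x, hx, rfl⟩
  exact hf (Set.mem_Ici.2 (hpos x hx)) (Set.mem_Ici.2 (hpos _ hmem))
    (le_csSup hS.bddAbove hx)

lemma map_csInf_fin {f : ℝ → ℝ} (hf : MonotoneOn f (Set.Ici 0)) {S : Set ℝ}
    (hS : S.Finite) (hne : S.Nonempty) (hpos : ∀ x ∈ S, (0:ℝ) ≤ x) :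
    sInf (f '' S) = f (sInf S) := by
  have hmem := hne.csInf_mem hS
  refine le_antisymm (csInf_le (hS.image f).bddBelow ⟨_, hmem, rfl⟩) ?_
  apply le_csInf (hne.image f)
  rintro _ ⟨x, hx, rfl⟩
  exact hf (Set.mem_Ici.2 (hpos _ hmem)) (Set.mem_Ici.2 (hpos x hx))
    (csInf_le hS.bddBelow hx)

variable {X X' : Type*} [MetricSpace X] [MetricSpace X'] [DecidableEq X']
variable {η : X → X'} {r β : ℝ}

lemma holder_mono (hr : 0 < r) (hβ : 0 < β) :
    MonotoneOn (fun t : ℝ => r * t ^ β) (Set.Ici 0) := fun x hx y _ hxy =>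
  mul_le_mul_of_nonneg_left (Real.rpow_le_rpow hx hxy hβ.le) hr.le

lemma holder_injOn (hr : 0 < r) (hβ : 0 < β) :
    Set.InjOn (fun t : ℝ => r * t ^ β) (Set.Ici 0) := by
  have : StrictMonoOn (fun t : ℝ => r * t ^ β) (Set.Ici 0) := fun x hx y _ hxy =>
    mul_lt_mul_of_pos_left (Real.rpow_lt_rpow hx hxy hβ) hr
  exact this.injOn

lemma eta_inj (hr : 0 < r) (hβ : 0 < β)
    (hη : ∀ x y : X, dist (η x) (η y) = r * dist x y ^ β) :
    Function.Injective η := by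
  intro x y h
  have h0 : r * dist x y ^ β = 0 := by rw [← hη, h, dist_self]
  have : dist x y ^ β = 0 := by
    rcases mul_eq_zero.1 h0 with h | h
    · exact absurd h hr.ne'
    · exact h
  have := Real.rpow_eq_zero_iff_of_nonneg dist_nonneg |>.1 this
  exact dist_eq_zero.1 this.1

lemma image_isBounded (hr : 0 < r) (hβ : 0 < β)
    (hη : ∀ x y : X, dist (η x) (η y) = r * dist x y ^ β)
    {A : Set X} (hA : Bornology.IsBounded A) : Bornology.IsBounded (η '' A) := by
  rw [Metric.isBounded_iff]
  refine ⟨r * Metric.diam A ^ β, ?_⟩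
  rintro _ ⟨x, hx, rfl⟩ _ ⟨y, hy, rfl⟩
  rw [hη]
  exact mul_le_mul_of_nonneg_left
    (Real.rpow_le_rpow dist_nonneg (Metric.dist_le_diam_of_mem hA hx hy) hβ.le) hr.le

lemma diam_image (hr : 0 < r) (hβ : 0 < β)
    (hη : ∀ x y : X, dist (η x) (η y) = r * dist x y ^ β)
    (A : Set X) (hA : Bornology.IsBounded A) :
    Metric.diam (η '' A) = r * Metric.diam A ^ β := by
  have hb' := image_isBounded hr hβ hη hA
  apply le_antisymm
  · apply Metric.diam_le_of_forall_dist_le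
      (mul_nonneg hr.le (Real.rpow_nonneg Metric.diam_nonneg β))
    rintro _ ⟨x, hx, rfl⟩ _ ⟨y, hy, rfl⟩
    rw [hη]
    exact mul_le_mul_of_nonneg_left
      (Real.rpow_le_rpow dist_nonneg (Metric.dist_le_diam_of_mem hA hx hy) hβ.le) hr.le
  · set D' := Metric.diam (η '' A) with hD'
    have hD'0 : 0 ≤ D' := Metric.diam_nonneg
    have key : Metric.diam A ≤ (D' / r) ^ (1/β) := by
      apply Metric.diam_le_of_forall_dist_le (Real.rpow_nonneg (by positivity) _)
      intro x hx y hy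
      have h1 : r * dist x y ^ β ≤ D' := by
        rw [← hη]
        exact Metric.dist_le_diam_of_mem hb' ⟨x, hx, rfl⟩ ⟨y, hy, rfl⟩
      have h2 : dist x y ^ β ≤ D' / r := (le_div_iff₀' hr).2 h1
      calc dist x y = (dist x y ^ β) ^ (1/β) := by
            rw [← Real.rpow_mul dist_nonneg, mul_one_div, div_self hβ.ne',
              Real.rpow_one]
        _ ≤ (D' / r) ^ (1/β) :=
            Real.rpow_le_rpow (Real.rpow_nonneg dist_nonneg _) h2 (by positivity)
    calc r * Metric.diam A ^ β ≤ r * ((D' / r) ^ (1/β)) ^ β :=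
          mul_le_mul_of_nonneg_left
            (Real.rpow_le_rpow Metric.diam_nonneg key hβ.le) hr.le
      _ = D' := by
          rw [← Real.rpow_mul (by positivity), one_div, inv_mul_cancel₀ hβ.ne',
            Real.rpow_one, mul_div_cancel₀ _ hr.ne']

end Aux

section Cover
open FinDim
open scoped Classical

variable {X X' : Type*} [MetricSpace X] [MetricSpace X'] [DecidableEq X']
variable {η : X → X'} {r β : ℝ}

/-- push a cover forward -/
noncomputable def phiU (η : X → X') (U : Finset (Finset X)) : Finset (Finset X') :=
  U.image (Finset.image η)

/-- pull a cover back -/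
noncomputable def psiU (η : X → X') (F : Finset X) (U' : Finset (Finset X')) :
    Finset (Finset X) :=
  U'.image (fun V' => F.filter (fun x => η x ∈ V'))

lemma phi_twoCover (hr : 0 < r) (hβ : 0 < β)
    (hη : ∀ x y : X, dist (η x) (η y) = r * dist x y ^ β)
    {F : Finset X} {U : Finset (Finset X)} (hU : IsTwoCover F U) :
    IsTwoCover (F.image η) (phiU η U) := by
  obtain ⟨h1, h2, h3⟩ := hU
  refine ⟨?_, ?_, ?_⟩
  · intro V' hV'
    obtain ⟨V, hV, rfl⟩ := Finset.mem_image.1 hV'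
    exact Finset.image_subset_image (h1 V hV)
  · intro V' hV'
    obtain ⟨V, hV, rfl⟩ := Finset.mem_image.1 hV'
    rw [Finset.card_image_of_injective V (eta_inj hr hβ hη)]
    exact h2 V hV
  · intro b hb
    obtain ⟨a, ha, rfl⟩ := Finset.mem_image.1 hb
    obtain ⟨V, hV, haV⟩ := h3 a ha
    exact ⟨V.image η, Finset.mem_image_of_mem _ hV, Finset.mem_image_of_mem _ haV⟩

lemma psi_section {F : Finset X} {U' : Finset (Finset X')}
    (hU' : IsTwoCover (F.image η) U') :
    phiU η (psiU η F U') = U' := by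
  obtain ⟨h1, _, _⟩ := hU'
  have key : ∀ V' ∈ U', (F.filter (fun x => η x ∈ V')).image η = V' := by
    intro V' hV'
    apply Finset.Subset.antisymm
    · intro y hy
      obtain ⟨x, hx, rfl⟩ := Finset.mem_image.1 hy
      exact (Finset.mem_filter.1 hx).2
    · intro y hy
      obtain ⟨x, hx, rfl⟩ := Finset.mem_image.1 (h1 V' hV' hy)
      exact Finset.mem_image_of_mem _ (Finset.mem_filter.2 ⟨hx, hy⟩)
  unfold phiU psiU
  rw [Finset.image_image]
  ext V'
  constructor
  · intro h
    obtain ⟨W', hW', rfl⟩ := Finset.mem_image.1 h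
    simpa [key W' hW'] using hW'
  · intro h
    exact Finset.mem_image.2 ⟨V', h, key V' h⟩

lemma psi_twoCover (hr : 0 < r) (hβ : 0 < β)
    (hη : ∀ x y : X, dist (η x) (η y) = r * dist x y ^ β)
    {F : Finset X} {U' : Finset (Finset X')} (hU' : IsTwoCover (F.image η) U') :
    IsTwoCover F (psiU η F U') := by
  obtain ⟨h1, h2, h3⟩ := hU'
  refine ⟨?_, ?_, ?_⟩
  · intro V hV
    obtain ⟨V', _, rfl⟩ := Finset.mem_image.1 hV
    exact Finset.filter_subset _ _
  · intro V hV
    obtain ⟨V', hV', rfl⟩ := Finset.mem_image.1 hV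
    have : (F.filter (fun x => η x ∈ V')).image η = V' := by
      have := psi_section (F := F) (U' := U') ⟨h1, h2, h3⟩
      apply Finset.Subset.antisymm
      · intro y hy
        obtain ⟨x, hx, rfl⟩ := Finset.mem_image.1 hy
        exact (Finset.mem_filter.1 hx).2
      · intro y hy
        obtain ⟨x, hx, rfl⟩ := Finset.mem_image.1 (h1 V' hV' hy)
        exact Finset.mem_image_of_mem _ (Finset.mem_filter.2 ⟨hx, hy⟩)
    have hcard : V'.card ≤ (F.filter (fun x => η x ∈ V')).card := by
      conv_lhs => rw [← this]
      apply Finset.card_image_le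
    exact le_trans (h2 V' hV') hcard
  · intro a ha
    obtain ⟨V', hV', haV'⟩ := h3 (η a) (Finset.mem_image_of_mem η ha)
    exact ⟨F.filter (fun x => η x ∈ V'), Finset.mem_image_of_mem _ hV',
      Finset.mem_filter.2 ⟨ha, haV'⟩⟩

lemma coverDiam_nonneg (U : Finset (Finset X)) : 0 ≤ coverDiam U := by
  apply Real.sSup_nonneg
  rintro _ ⟨V, _, rfl⟩
  exact Metric.diam_nonneg

lemma nablaF_nonneg (F : Finset X) : 0 ≤ nablaF F := by
  apply Real.sInf_nonneg
  rintro _ ⟨U, _, rfl⟩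
  exact coverDiam_nonneg U

lemma coverDiam_phi (hr : 0 < r) (hβ : 0 < β)
    (hη : ∀ x y : X, dist (η x) (η y) = r * dist x y ^ β)
    {U : Finset (Finset X)} (hne : U.Nonempty) :
    coverDiam (phiU η U) = r * coverDiam U ^ β := by
  have hset : {t : ℝ | ∃ V' ∈ phiU η U, t = Metric.diam (V' : Set X')}
      = (fun t : ℝ => r * t ^ β) '' {t : ℝ | ∃ V ∈ U, t = Metric.diam (V : Set X)} := by
    ext t
    constructor
    · rintro ⟨V', hV', rfl⟩
      obtain ⟨V, hV, rfl⟩ := Finset.mem_image.1 hV'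
      refine ⟨Metric.diam (V : Set X), ⟨V, hV, rfl⟩, ?_⟩
      rw [Finset.coe_image]
      exact (diam_image hr hβ hη _ V.finite_toSet.isBounded).symm
    · rintro ⟨t, ⟨V, hV, rfl⟩, rfl⟩
      refine ⟨V.image η, Finset.mem_image_of_mem _ hV, ?_⟩
      rw [Finset.coe_image]
      exact (diam_image hr hβ hη _ V.finite_toSet.isBounded).symm
  have hfin : {t : ℝ | ∃ V ∈ U, t = Metric.diam (V : Set X)}.Finite := by
    have : {t : ℝ | ∃ V ∈ U, t = Metric.diam (V : Set X)}
        = (fun V : Finset X => Metric.diam (V : Set X)) '' ↑U := by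
      ext t; constructor
      · rintro ⟨V, hV, rfl⟩; exact ⟨V, hV, rfl⟩
      · rintro ⟨V, hV, rfl⟩; exact ⟨V, hV, rfl⟩
    rw [this]; exact U.finite_toSet.image _
  have hne' : {t : ℝ | ∃ V ∈ U, t = Metric.diam (V : Set X)}.Nonempty := by
    obtain ⟨V, hV⟩ := hne
    exact ⟨_, V, hV, rfl⟩
  unfold coverDiam
  rw [hset, map_csSup_fin (holder_mono hr hβ) hfin hne']
  rintro _ ⟨V, _, rfl⟩
  exact Metric.diam_nonneg

end Cover

section Main
open FinDim
open scoped Classical Pointwise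

variable {X X' : Type*} [MetricSpace X] [MetricSpace X'] [DecidableEq X']
variable {η : X → X'} {r β : ℝ}

lemma twoCover_singleton (F : Finset X) (hF : 2 ≤ F.card) : IsTwoCover F {F} :=
  ⟨fun V hV => by simp_all, fun V hV => by simp_all,
   fun a ha => ⟨F, Finset.mem_singleton_self F, ha⟩⟩

lemma CD_finite (F : Finset X) :
    {t : ℝ | ∃ U, IsTwoCover F U ∧ t = coverDiam U}.Finite := by
  apply Set.Finite.subset ((F.powerset.powerset).finite_toSet.image coverDiam)
  rintro _ ⟨U, hU, rfl⟩
  refine ⟨U, ?_, rfl⟩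
  simp only [Finset.coe_powerset, Set.mem_preimage, Set.mem_powerset_iff]
  intro V hV
  simp only [Finset.coe_powerset, Set.mem_preimage, Set.mem_powerset_iff]
  exact_mod_cast hU.1 V hV

lemma twoCover_nonempty {F : Finset X} (hFne : F.Nonempty) {U : Finset (Finset X)}
    (hU : IsTwoCover F U) : U.Nonempty := by
  obtain ⟨a, ha⟩ := hFne
  obtain ⟨V, hV, _⟩ := hU.2.2 a ha
  exact ⟨V, hV⟩

lemma nablaF_image (hr : 0 < r) (hβ : 0 < β)
    (hη : ∀ x y : X, dist (η x) (η y) = r * dist x y ^ β)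
    (F : Finset X) (hF : 2 ≤ F.card) :
    nablaF (F.image η) = r * nablaF F ^ β := by
  have hFne : F.Nonempty := Finset.card_pos.1 (by omega)
  have hset : {t : ℝ | ∃ U', IsTwoCover (F.image η) U' ∧ t = coverDiam U'}
      = (fun t : ℝ => r * t ^ β) '' {t : ℝ | ∃ U, IsTwoCover F U ∧ t = coverDiam U} := by
    ext t
    constructor
    · rintro ⟨U', hU', rfl⟩
      have hΨ := psi_twoCover hr hβ hη hU'
      have hΨne : (psiU η F U').Nonempty := twoCover_nonempty hFne hΨ
      refine ⟨coverDiam (psiU η F U'), ⟨_, hΨ, rfl⟩, ?_⟩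
      show r * _ ^ β = _
      rw [← coverDiam_phi hr hβ hη hΨne, psi_section hU']
    · rintro ⟨t, ⟨U, hU, rfl⟩, rfl⟩
      exact ⟨phiU η U, phi_twoCover hr hβ hη hU,
        (coverDiam_phi hr hβ hη (twoCover_nonempty hFne hU)).symm⟩
  have hne : {t : ℝ | ∃ U, IsTwoCover F U ∧ t = coverDiam U}.Nonempty :=
    ⟨_, {F}, twoCover_singleton F hF, rfl⟩
  unfold nablaF
  rw [hset, map_csInf_fin (holder_mono hr hβ) (CD_finite F) hne]
  rintro _ ⟨U, _, rfl⟩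
  exact coverDiam_nonneg U

lemma Hcov_phi (hr : 0 < r) (hβ : 0 < β)
    (hη : ∀ x y : X, dist (η x) (η y) = r * dist x y ^ β)
    (U : Finset (Finset X)) (s : ℝ) :
    Hcov (phiU η U) s = r ^ s * Hcov U (β * s) := by
  unfold Hcov phiU
  rw [Finset.sum_image (fun x _ y _ h => Finset.image_injective (eta_inj hr hβ hη) h),
    Finset.mul_sum]
  apply Finset.sum_congr rfl
  intro V _
  rw [Finset.coe_image, diam_image hr hβ hη _ V.finite_toSet.isBounded,
    Real.mul_rpow hr.le (Real.rpow_nonneg Metric.diam_nonneg _),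
    ← Real.rpow_mul Metric.diam_nonneg]

lemma HH_image (hr : 0 < r) (hβ : 0 < β)
    (hη : ∀ x y : X, dist (η x) (η y) = r * dist x y ^ β)
    (F : Finset X) (hF : 2 ≤ F.card) (s : ℝ) :
    HH (F.image η) s = r ^ s * HH F (β * s) := by
  have hFne : F.Nonempty := Finset.card_pos.1 (by omega)
  have hnabla := nablaF_image hr hβ hη F hF
  have hset : {h : ℝ | ∃ U', IsTwoCover (F.image η) U' ∧
        coverDiam U' = nablaF (F.image η) ∧ h = Hcov U' s}
      = (r ^ s) • {h : ℝ | ∃ U, IsTwoCover F U ∧ coverDiam U = nablaF F ∧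
          h = Hcov U (β * s)} := by
    ext h
    rw [Set.mem_smul_set]
    constructor
    · rintro ⟨U', hU', hcd, rfl⟩
      have hΨ := psi_twoCover hr hβ hη hU'
      have hΨne : (psiU η F U').Nonempty := twoCover_nonempty hFne hΨ
      have hphi : phiU η (psiU η F U') = U' := psi_section hU'
      have hcd' : coverDiam (psiU η F U') = nablaF F := by
        apply holder_injOn hr hβ (Set.mem_Ici.2 (coverDiam_nonneg _))
          (Set.mem_Ici.2 (nablaF_nonneg F))
        show r * _ ^ β = r * _ ^ β
        rw [← coverDiam_phi hr hβ hη hΨne, hphi, hcd, hnabla]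
      refine ⟨Hcov (psiU η F U') (β * s), ⟨_, hΨ, hcd', rfl⟩, ?_⟩
      rw [smul_eq_mul, ← Hcov_phi hr hβ hη, hphi]
    · rintro ⟨h, ⟨U, hU, hcd, rfl⟩, rfl⟩
      refine ⟨phiU η U, phi_twoCover hr hβ hη hU, ?_, ?_⟩
      · rw [coverDiam_phi hr hβ hη (twoCover_nonempty hFne hU), hcd, hnabla]
      · rw [smul_eq_mul, Hcov_phi hr hβ hη]
  unfold HH
  rw [hset, Real.sInf_smul_of_nonneg (Real.rpow_nonneg hr.le s), smul_eq_mul]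

end Main

open Pointwise

open FinDim in
/-- `β · dim_fH(η(F)) = dim_fH(F)` for an `(r,β)`-Hölder equivalence `η`. -/
theorem stmt4 {X X' : Type*} [MetricSpace X] [MetricSpace X'] [DecidableEq X'] (η : X → X') (r β : ℝ)
    (hr : 0 < r) (hβ : 0 < β)
    (hη : ∀ x y : X, dist (η x) (η y) = r * dist x y ^ β)
    (F : Finset X) (hF : 2 ≤ F.card) (hfoc : ∀ a, ¬ IsFocal F a) :
    (∀ a, ¬ IsFocal (F.image η) a) ∧
    β * dimfH (F.image η) = dimfH F := by
  have hdiam' : Metric.diam ((F.image η : Finset X') : Set X')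
      = r * Metric.diam (F : Set X) ^ β := by
    rw [Finset.coe_image]
    exact diam_image hr hβ hη _ F.finite_toSet.isBounded
  constructor
  · rintro a ⟨haF', hdist⟩
    obtain ⟨b, hb, rfl⟩ := Finset.mem_image.1 haF'
    apply hfoc b
    refine ⟨hb, fun x hx hxb => ?_⟩
    have hne : η x ≠ η b := fun h => hxb (eta_inj hr hβ hη h)
    have h1 := hdist (η x) (Finset.mem_image_of_mem η hx) hne
    rw [hη, hdiam'] at h1
    exact holder_injOn hr hβ (Set.mem_Ici.2 dist_nonneg)
      (Set.mem_Ici.2 Metric.diam_nonneg) h1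
  · have hSet : {s : ℝ | 0 < s ∧ HH (F.image η) s
        = Metric.diam ((F.image η : Finset X') : Set X') ^ s}
        = β⁻¹ • {s : ℝ | 0 < s ∧ HH F s = Metric.diam (F : Set X) ^ s} := by
      ext s
      rw [Set.mem_smul_set]
      have hkey : ∀ t : ℝ, (HH (F.image η) t
          = Metric.diam ((F.image η : Finset X') : Set X') ^ t)
          ↔ HH F (β * t) = Metric.diam (F : Set X) ^ (β * t) := by
        intro t
        rw [HH_image hr hβ hη F hF, hdiam',
          Real.mul_rpow hr.le (Real.rpow_nonneg Metric.diam_nonneg _),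
          ← Real.rpow_mul Metric.diam_nonneg]
        constructor
        · intro h
          exact mul_left_cancel₀ (by positivity : (r : ℝ) ^ t ≠ 0) h
        · intro h
          rw [h]
      constructor
      · rintro ⟨hs, heq⟩
        refine ⟨β * s, ⟨by positivity, (hkey s).1 heq⟩, ?_⟩
        rw [smul_eq_mul, ← mul_assoc, inv_mul_cancel₀ hβ.ne', one_mul]
      · rintro ⟨t, ⟨ht, heq⟩, rfl⟩
        have h1 : β * (β⁻¹ • t) = t := by
          rw [smul_eq_mul, ← mul_assoc, mul_inv_cancel₀ hβ.ne', one_mul]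
        refine ⟨by rw [smul_eq_mul]; positivity, ?_⟩
        rw [hkey, h1]
        exact heq
    show β * sInf _ = sInf _
    rw [hSet, Real.sInf_smul_of_nonneg (by positivity), smul_eq_mul,
      ← mul_assoc, mul_inv_cancel₀ hβ.ne', one_mul]
end

section
/- Let F be a finite metric space with at least two points and no focal points. Then ln 2 / ln(Δ(F)/δ(F)) ≤ dim_fH(F) ≤ ln(|F| − 1) / ln(Δ(F)/∇(F)), where |F| is the number of points of F. -/
open Metric

section StmtAux

open Metric FinDim Real

variable {X : Type*} [MetricSpace X]

set_option linter.unusedSectionVars false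

private lemma aux_coverDiam_set_eq (U : Finset (Finset X)) :
    {r : ℝ | ∃ V ∈ U, r = Metric.diam (V : Set X)}
      = (fun V : Finset X => Metric.diam (V : Set X)) '' ↑U := by
  ext r
  constructor
  · rintro ⟨V, hV, rfl⟩; exact ⟨V, hV, rfl⟩
  · rintro ⟨V, hV, rfl⟩; exact ⟨V, hV, rfl⟩

private lemma aux_diam_le_coverDiam {U : Finset (Finset X)} {V : Finset X} (hV : V ∈ U) :
    Metric.diam (V : Set X) ≤ coverDiam U := by
  apply le_csSup
  · rw [aux_coverDiam_set_eq]
    exact (U.finite_toSet.image _).bddAbove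
  · exact ⟨V, hV, rfl⟩

private lemma aux_coverDiam_le {U : Finset (Finset X)} (hU : U.Nonempty) {c : ℝ}
    (h : ∀ V ∈ U, Metric.diam (V : Set X) ≤ c) : coverDiam U ≤ c := by
  apply csSup_le
  · obtain ⟨V, hV⟩ := hU; exact ⟨_, V, hV, rfl⟩
  · rintro r ⟨V, hV, rfl⟩; exact h V hV

private lemma aux_coverDiam_mem {U : Finset (Finset X)} (hU : U.Nonempty) :
    ∃ V ∈ U, coverDiam U = Metric.diam (V : Set X) := by
  have hfin : {r : ℝ | ∃ V ∈ U, r = Metric.diam (V : Set X)}.Finite := by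
    rw [aux_coverDiam_set_eq]; exact U.finite_toSet.image _
  have hne : {r : ℝ | ∃ V ∈ U, r = Metric.diam (V : Set X)}.Nonempty := by
    obtain ⟨V, hV⟩ := hU; exact ⟨_, V, hV, rfl⟩
  exact (hne.csSup_mem hfin)

private lemma aux_twoCover_self {F : Finset X} (hF : 2 ≤ F.card) :
    IsTwoCover F {F} := by
  refine ⟨?_, ?_, ?_⟩
  · intro V hV; rw [Finset.mem_singleton] at hV; simp [hV]
  · intro V hV; rw [Finset.mem_singleton] at hV; simpa [hV] using hF
  · intro a ha; exact ⟨F, Finset.mem_singleton_self F, ha⟩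

private lemma aux_nabla_set_finite (F : Finset X) :
    {r : ℝ | ∃ U : Finset (Finset X), IsTwoCover F U ∧ r = coverDiam U}.Finite := by
  apply Set.Finite.subset ((F.powerset.powerset.finite_toSet).image coverDiam)
  rintro r ⟨U, hU, rfl⟩
  refine ⟨U, ?_, rfl⟩
  rw [Finset.mem_coe, Finset.mem_powerset]
  intro V hV
  exact Finset.mem_powerset.mpr (hU.1 V hV)

private lemma aux_nablaF_mem {F : Finset X} (hF : 2 ≤ F.card) :
    ∃ U : Finset (Finset X), IsTwoCover F U ∧ coverDiam U = nablaF F := by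
  have hne : {r : ℝ | ∃ U : Finset (Finset X), IsTwoCover F U ∧ r = coverDiam U}.Nonempty :=
    ⟨_, {F}, aux_twoCover_self hF, rfl⟩
  obtain ⟨U, hU, h⟩ := hne.csInf_mem (aux_nabla_set_finite F)
  exact ⟨U, hU, h.symm⟩

private lemma aux_nablaF_le {F : Finset X} {U : Finset (Finset X)} (hU : IsTwoCover F U) :
    nablaF F ≤ coverDiam U := by
  apply csInf_le ((aux_nabla_set_finite F).bddBelow)
  exact ⟨U, hU, rfl⟩

private lemma aux_sep_set_finite (F : Finset X) :
    {r : ℝ | ∃ x ∈ F, ∃ y ∈ F, x ≠ y ∧ r = dist x y}.Finite := by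
  apply Set.Finite.subset ((F.finite_toSet.prod F.finite_toSet).image
    (fun p : X × X => dist p.1 p.2))
  rintro r ⟨x, hx, y, hy, _, rfl⟩
  exact ⟨(x, y), ⟨hx, hy⟩, rfl⟩

private lemma aux_sep_mem {F : Finset X} (hF : 2 ≤ F.card) :
    ∃ x ∈ F, ∃ y ∈ F, x ≠ y ∧ sep F = dist x y := by
  have hne : {r : ℝ | ∃ x ∈ F, ∃ y ∈ F, x ≠ y ∧ r = dist x y}.Nonempty := by
    obtain ⟨a, ha, b, hb, hab⟩ := Finset.one_lt_card.mp hF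
    exact ⟨_, a, ha, b, hb, hab, rfl⟩
  exact hne.csInf_mem (aux_sep_set_finite F)

private lemma aux_sep_le_dist {F : Finset X} {x y : X} (hx : x ∈ F) (hy : y ∈ F)
    (hxy : x ≠ y) : sep F ≤ dist x y := by
  apply csInf_le ((aux_sep_set_finite F).bddBelow)
  exact ⟨x, hx, y, hy, hxy, rfl⟩

end StmtAux
section StmtAux2

open Metric FinDim Real

variable {X : Type*} [MetricSpace X]

attribute [local instance] Classical.propDecidable

noncomputable local instance instDecEqX : DecidableEq X := Classical.decEq X

set_option linter.unusedSectionVars false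

private lemma aux_nofocal {F : Finset X} (hfoc : ∀ a, ¬ IsFocal F a) {a : X} (ha : a ∈ F) :
    ∃ x ∈ F, x ≠ a ∧ dist a x < Metric.diam (F : Set X) := by
  have h := hfoc a
  rw [IsFocal, not_and] at h
  push_neg at h
  obtain ⟨x, hx, hxa, hne⟩ := h ha
  exact ⟨x, hx, hxa,
    lt_of_le_of_ne (Metric.dist_le_diam_of_mem F.finite_toSet.isBounded ha hx) hne⟩

private lemma aux_sep_pos {F : Finset X} (hF : 2 ≤ F.card) : 0 < sep F := by
  obtain ⟨x, hx, y, hy, hxy, h⟩ := aux_sep_mem hF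
  rw [h]; exact dist_pos.mpr hxy

private lemma aux_sep_lt_diam {F : Finset X} (hF : 2 ≤ F.card) (hfoc : ∀ a, ¬ IsFocal F a) :
    sep F < Metric.diam (F : Set X) := by
  obtain ⟨x, hx, y, hy, hxy, h⟩ := aux_sep_mem hF
  obtain ⟨z, hz, hzx, hlt⟩ := aux_nofocal hfoc hx
  exact lt_of_le_of_lt (aux_sep_le_dist hx hz (Ne.symm hzx)) hlt

private lemma aux_diam_pair (x y : X) :
    Metric.diam ((({x, y} : Finset X)) : Set X) = dist x y := by
  rw [Finset.coe_insert, Finset.coe_singleton, Metric.diam_pair]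

private lemma aux_coverDiam_singleton (V : Finset X) :
    coverDiam ({V} : Finset (Finset X)) = Metric.diam (V : Set X) := by
  apply le_antisymm
  · apply aux_coverDiam_le ⟨V, Finset.mem_singleton_self V⟩
    intro W hW
    rw [Finset.mem_singleton] at hW
    rw [hW]
  · exact aux_diam_le_coverDiam (Finset.mem_singleton_self V)

private lemma aux_exists_nn {F : Finset X} (hF : 2 ≤ F.card) :
    ∀ a ∈ F, ∃ b, b ∈ F ∧ b ≠ a ∧ ∀ x ∈ F, x ≠ a → dist a b ≤ dist a x := by
  intro a ha
  have hne : (F.erase a).Nonempty := by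
    rw [← Finset.card_pos, Finset.card_erase_of_mem ha]; omega
  obtain ⟨b, hb, hmin⟩ := Finset.exists_min_image (F.erase a) (dist a) hne
  rw [Finset.mem_erase] at hb
  exact ⟨b, hb.2, hb.1, fun x hx hxa => hmin x (Finset.mem_erase.mpr ⟨hxa, hx⟩)⟩

private lemma aux_main_cover {F : Finset X} (hF : 2 ≤ F.card) (hfoc : ∀ a, ¬ IsFocal F a) :
    ∃ U : Finset (Finset X), IsTwoCover F U ∧ coverDiam U = nablaF F ∧
      U.card ≤ F.card - 1 ∧ nablaF F < Metric.diam (F : Set X) ∧ sep F ≤ nablaF F := by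
  classical
  choose! g hgF hgne hgmin using aux_exists_nn hF
  obtain ⟨p, hp, q, hq, hpq, hsep⟩ := aux_sep_mem hF
  set U : Finset (Finset X) := insert {p, q} ((F \ {p, q}).image fun a => {a, g a}) with hUdef
  have hmemU : ∀ V ∈ U, V = {p, q} ∨ ∃ a ∈ F, V = {a, g a} := by
    intro V hV
    rw [hUdef, Finset.mem_insert] at hV
    rcases hV with h | h
    · exact Or.inl h
    · obtain ⟨a, ha, rfl⟩ := Finset.mem_image.mp h
      rw [Finset.mem_sdiff] at ha
      exact Or.inr ⟨a, ha.1, rfl⟩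
  have hUne : U.Nonempty := ⟨{p, q}, Finset.mem_insert_self _ _⟩
  have hcov : IsTwoCover F U := by
    refine ⟨?_, ?_, ?_⟩
    · intro V hV
      rcases hmemU V hV with rfl | ⟨a, ha, rfl⟩
      · exact Finset.insert_subset hp (Finset.singleton_subset_iff.mpr hq)
      · exact Finset.insert_subset ha (Finset.singleton_subset_iff.mpr (hgF a ha))
    · intro V hV
      rcases hmemU V hV with rfl | ⟨a, ha, rfl⟩
      · exact le_of_eq (Finset.card_pair hpq).symm
      · exact le_of_eq (Finset.card_pair (hgne a ha).symm).symm
    · intro a ha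
      by_cases hcase : a ∈ ({p, q} : Finset X)
      · exact ⟨{p, q}, Finset.mem_insert_self _ _, hcase⟩
      · refine ⟨{a, g a}, ?_, Finset.mem_insert_self _ _⟩
        rw [hUdef]
        exact Finset.mem_insert_of_mem
          (Finset.mem_image_of_mem _ (Finset.mem_sdiff.mpr ⟨ha, hcase⟩))
  obtain ⟨U₀, hU₀, hU₀d⟩ := aux_nablaF_mem hF
  have hnu_le : ∀ a ∈ F, dist a (g a) ≤ nablaF F := by
    intro a ha
    obtain ⟨V, hV, haV⟩ := hU₀.2.2 a ha
    obtain ⟨b, hbV, hba⟩ := Finset.exists_mem_ne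
      (lt_of_lt_of_le one_lt_two (hU₀.2.1 V hV)) a
    calc dist a (g a) ≤ dist a b := hgmin a ha b (hU₀.1 V hV hbV) hba
      _ ≤ Metric.diam (V : Set X) :=
        Metric.dist_le_diam_of_mem V.finite_toSet.isBounded haV hbV
      _ ≤ coverDiam U₀ := aux_diam_le_coverDiam hV
      _ = nablaF F := hU₀d
  have hsep_le : sep F ≤ nablaF F := by
    calc sep F ≤ dist p (g p) :=
      aux_sep_le_dist hp (hgF p hp) (Ne.symm (hgne p hp))
    _ ≤ nablaF F := hnu_le p hp
  have hdiam_le : ∀ V ∈ U, Metric.diam (V : Set X) ≤ nablaF F := by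
    intro V hV
    rcases hmemU V hV with rfl | ⟨a, ha, rfl⟩
    · rw [aux_diam_pair, ← hsep]; exact hsep_le
    · rw [aux_diam_pair]; exact hnu_le a ha
  have hcd : coverDiam U = nablaF F :=
    le_antisymm (aux_coverDiam_le hUne hdiam_le) (aux_nablaF_le hcov)
  have hlt : nablaF F < Metric.diam (F : Set X) := by
    rw [← hcd]
    obtain ⟨V, hV, hVeq⟩ := aux_coverDiam_mem hUne
    rw [hVeq]
    rcases hmemU V hV with rfl | ⟨a, ha, rfl⟩
    · rw [aux_diam_pair, ← hsep]; exact aux_sep_lt_diam hF hfoc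
    · rw [aux_diam_pair]
      obtain ⟨x, hx, hxa, hxlt⟩ := aux_nofocal hfoc ha
      exact lt_of_le_of_lt (hgmin a ha x hx hxa) hxlt
  have hcard : U.card ≤ F.card - 1 := by
    have h1 : U.card ≤ ((F \ {p, q}).image fun a => ({a, g a} : Finset X)).card + 1 :=
      Finset.card_insert_le _ _
    have h2 : ((F \ {p, q}).image fun a => ({a, g a} : Finset X)).card ≤ (F \ {p, q}).card :=
      Finset.card_image_le
    have h3 : (F \ {p, q}).card = F.card - 2 := by
      rw [Finset.card_sdiff_of_subset (Finset.insert_subset hp (Finset.singleton_subset_iff.mpr hq)),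
        Finset.card_pair hpq]
    omega
  exact ⟨U, hcov, hcd, hcard, hlt, hsep_le⟩

end StmtAux2
open FinDim in
/-- `ln 2 / ln(Δ(F)/δ(F)) ≤ dim_fH(F) ≤ ln(|F|−1) / ln(Δ(F)/∇(F))`. -/
theorem stmt6 {X : Type*} [MetricSpace X] (F : Finset X) (hF : 2 ≤ F.card)
    (hfoc : ∀ a, ¬ IsFocal F a) :
    Real.log 2 / Real.log (Metric.diam (F : Set X) / sep F) ≤ dimfH F ∧
    dimfH F ≤ Real.log ((F.card : ℝ) - 1) / Real.log (Metric.diam (F : Set X) / nablaF F) := by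
  classical
  set Δ := Metric.diam (F : Set X) with hDdef
  -- F has at least 3 points
  have hn3 : 3 ≤ F.card := by
    by_contra hcon
    push_neg at hcon
    have h2 : F.card = 2 := le_antisymm (by omega) hF
    obtain ⟨a, b, hab, hFab⟩ := Finset.card_eq_two.mp h2
    apply hfoc a
    constructor
    · rw [hFab]; exact Finset.mem_insert_self a {b}
    · intro x hx hxa
      have hxb : x = b := by
        rw [hFab, Finset.mem_insert, Finset.mem_singleton] at hx
        tauto
      subst hxb
      have hcoe : (F : Set X) = {a, x} := by rw [hFab]; simp
      rw [hcoe, Metric.diam_pair]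
  have hdpos := aux_sep_pos hF
  have hdltD : sep F < Δ := aux_sep_lt_diam hF hfoc
  have hDpos : 0 < Δ := lt_trans hdpos hdltD
  obtain ⟨U₁, hU₁cov, hU₁d, hU₁card, hndlt, hdlen⟩ := aux_main_cover hF hfoc
  have hnpos : 0 < nablaF F := lt_of_lt_of_le hdpos hdlen
  have hratδ : 1 < Δ / sep F := (one_lt_div hdpos).mpr hdltD
  have hratn : 1 < Δ / nablaF F := (one_lt_div hnpos).mpr hndlt
  have hlogδ : 0 < Real.log (Δ / sep F) := Real.log_pos hratδ
  have hlogn : 0 < Real.log (Δ / nablaF F) := Real.log_pos hratn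
  have hn1 : (2:ℝ) ≤ (F.card : ℝ) - 1 := by
    have : (3:ℝ) ≤ (F.card : ℝ) := by exact_mod_cast hn3
    linarith
  -- the finset of optimal 2-coverings
  set 𝒢 : Finset (Finset (Finset X)) :=
    F.powerset.powerset.filter (fun U => IsTwoCover F U ∧ coverDiam U = nablaF F) with h𝒢def
  have h𝒢mem : ∀ U, U ∈ 𝒢 ↔ IsTwoCover F U ∧ coverDiam U = nablaF F := by
    intro U
    rw [h𝒢def, Finset.mem_filter]
    constructor
    · rintro ⟨-, h⟩; exact h
    · intro h
      refine ⟨?_, h⟩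
      rw [Finset.mem_powerset]
      intro V hV
      exact Finset.mem_powerset.mpr (h.1.1 V hV)
  have hU₁𝒢 : U₁ ∈ 𝒢 := (h𝒢mem U₁).mpr ⟨hU₁cov, hU₁d⟩
  have h𝒢ne : 𝒢.Nonempty := ⟨U₁, hU₁𝒢⟩
  -- HH as a finite infimum
  have hHH : ∀ s : ℝ, HH F s = 𝒢.inf' h𝒢ne (fun U => Hcov U s) := by
    intro s
    apply le_antisymm
    · obtain ⟨U, hU, hval⟩ := Finset.exists_mem_eq_inf' h𝒢ne (fun U => Hcov U s)
      rw [hval]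
      apply csInf_le
      · refine ⟨0, ?_⟩
        rintro h ⟨U', hU', hd', rfl⟩
        exact Finset.sum_nonneg fun V _ => Real.rpow_nonneg Metric.diam_nonneg s
      · obtain ⟨hc, hd⟩ := (h𝒢mem U).mp hU
        exact ⟨U, hc, hd, rfl⟩
    · refine le_csInf ⟨Hcov U₁ s, U₁, hU₁cov, hU₁d, rfl⟩ ?_
      rintro h ⟨U', hc, hd, rfl⟩
      exact Finset.inf'_le _ ((h𝒢mem U').mpr ⟨hc, hd⟩)
  -- each member of an optimal covering has diameter at least sep F
  have hdiam_mem_lb : ∀ U ∈ 𝒢, ∀ V ∈ U, sep F ≤ Metric.diam (V : Set X) := by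
    intro U hU V hV
    obtain ⟨hc, hd⟩ := (h𝒢mem U).mp hU
    obtain ⟨x, hx, y, hy, hxy⟩ := Finset.one_lt_card.mp
      (lt_of_lt_of_le one_lt_two (hc.2.1 V hV))
    calc sep F ≤ dist x y := aux_sep_le_dist (hc.1 V hV hx) (hc.1 V hV hy) hxy
      _ ≤ _ := Metric.dist_le_diam_of_mem V.finite_toSet.isBounded hx hy
  -- lower bound for HH
  have hHH_lb : ∀ s : ℝ, 0 ≤ s → 2 * sep F ^ s ≤ HH F s := by
    intro s hs
    rw [hHH s]
    obtain ⟨U, hU, hval⟩ := Finset.exists_mem_eq_inf' h𝒢ne (fun U => Hcov U s)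
    rw [hval]
    obtain ⟨hc, hd⟩ := (h𝒢mem U).mp hU
    have hUne : U.Nonempty := by
      obtain ⟨a, ha, -⟩ := Finset.one_lt_card.mp (lt_of_lt_of_le one_lt_two hF)
      obtain ⟨V, hV, -⟩ := hc.2.2 a ha
      exact ⟨V, hV⟩
    have hU2 : 1 < U.card := by
      by_contra hle
      push_neg at hle
      have h1 : U.card = 1 := le_antisymm hle (Finset.card_pos.mpr hUne)
      obtain ⟨V, hVeq⟩ := Finset.card_eq_one.mp h1
      have hVF : V = F := by
        apply Finset.Subset.antisymm (hc.1 V (by simp [hVeq]))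
        intro a ha
        obtain ⟨W, hW, haW⟩ := hc.2.2 a ha
        rw [hVeq, Finset.mem_singleton] at hW
        rwa [← hW]
      have hcd : coverDiam U = Δ := by
        rw [hVeq, aux_coverDiam_singleton, hVF]
      rw [hcd] at hd
      have hcontra : Δ < Δ := by
        calc Δ = nablaF F := hd
          _ < Δ := hndlt
      exact lt_irrefl _ hcontra
    obtain ⟨V₁, hV₁⟩ := hUne
    obtain ⟨V₂, hV₂, hV₂ne⟩ := Finset.exists_mem_ne hU2 V₁
    have hsub : ({V₁, V₂} : Finset (Finset X)) ⊆ U := by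
      intro W hW
      rw [Finset.mem_insert, Finset.mem_singleton] at hW
      rcases hW with rfl | rfl <;> assumption
    calc 2 * sep F ^ s = sep F ^ s + sep F ^ s := by ring
      _ ≤ Metric.diam (V₁ : Set X) ^ s + Metric.diam (V₂ : Set X) ^ s :=
        add_le_add
          (Real.rpow_le_rpow hdpos.le (hdiam_mem_lb U hU V₁ hV₁) hs)
          (Real.rpow_le_rpow hdpos.le (hdiam_mem_lb U hU V₂ hV₂) hs)
      _ = ∑ V ∈ ({V₁, V₂} : Finset (Finset X)), Metric.diam (V : Set X) ^ s :=
        by rw [Finset.sum_pair hV₂ne.symm]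
      _ ≤ Hcov U s := Finset.sum_le_sum_of_subset_of_nonneg hsub
          fun W _ _ => Real.rpow_nonneg Metric.diam_nonneg s
  -- upper bound for HH
  have hHH_ub : ∀ s : ℝ, 0 ≤ s → HH F s ≤ ((F.card : ℝ) - 1) * nablaF F ^ s := by
    intro s hs
    rw [hHH s]
    calc 𝒢.inf' h𝒢ne (fun U => Hcov U s) ≤ Hcov U₁ s := Finset.inf'_le _ hU₁𝒢
      _ ≤ ∑ _V ∈ U₁, nablaF F ^ s := Finset.sum_le_sum fun V hV =>
          Real.rpow_le_rpow Metric.diam_nonneg (hU₁d ▸ aux_diam_le_coverDiam hV) hs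
      _ = (U₁.card : ℝ) * nablaF F ^ s := by rw [Finset.sum_const, nsmul_eq_mul]
      _ ≤ ((F.card : ℝ) - 1) * nablaF F ^ s := by
          apply mul_le_mul_of_nonneg_right _ (Real.rpow_nonneg hnpos.le s)
          have h : ((U₁.card : ℕ) : ℝ) ≤ ((F.card - 1 : ℕ) : ℝ) := Nat.cast_le.mpr hU₁card
          rwa [Nat.cast_sub (by omega), Nat.cast_one] at h
  -- continuity of HH
  have hcont : Continuous (fun s => HH F s) := by
    have heq : (fun s => HH F s) = fun s => 𝒢.inf' h𝒢ne (fun U => Hcov U s) := funext hHH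
    rw [heq]
    apply Continuous.finset_inf'_apply h𝒢ne
    intro U hU
    apply continuous_finset_sum
    intro V hV
    have hVpos : 0 < Metric.diam (V : Set X) :=
      lt_of_lt_of_le hdpos (hdiam_mem_lb U hU V hV)
    exact continuous_iff_continuousAt.mpr fun b => Real.continuousAt_const_rpow hVpos.ne'
  set L0 := Real.log 2 / Real.log (Δ / sep F) with hL0
  set B0 := Real.log ((F.card : ℝ) - 1) / Real.log (Δ / nablaF F) with hB0
  have hL0pos : 0 < L0 := div_pos (Real.log_pos one_lt_two) hlogδ
  have hB0pos : 0 < B0 := div_pos (Real.log_pos (by linarith)) hlogn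
  have hkeyδ : (Δ / sep F) ^ L0 = 2 := by
    rw [Real.rpow_def_of_pos (div_pos hDpos hdpos), mul_comm, hL0,
      div_mul_cancel₀ _ hlogδ.ne']
    exact Real.exp_log two_pos
  have hkeyn : (Δ / nablaF F) ^ B0 = (F.card : ℝ) - 1 := by
    rw [Real.rpow_def_of_pos (div_pos hDpos hnpos), mul_comm, hB0,
      div_mul_cancel₀ _ hlogn.ne']
    exact Real.exp_log (by linarith)
  -- bounds for any solution s
  have hS_lb : ∀ s : ℝ, 0 < s → HH F s = Δ ^ s → L0 ≤ s := by
    intro s hs heq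
    have h1 : 2 * sep F ^ s ≤ Δ ^ s := heq ▸ hHH_lb s hs.le
    have h2 : (2 : ℝ) ≤ (Δ / sep F) ^ s := by
      rw [Real.div_rpow hDpos.le hdpos.le, le_div_iff₀ (Real.rpow_pos_of_pos hdpos s)]
      linarith
    have h3 : Real.log 2 ≤ s * Real.log (Δ / sep F) := by
      rw [← Real.log_rpow (div_pos hDpos hdpos)]
      exact (Real.log_le_log_iff two_pos
        (Real.rpow_pos_of_pos (div_pos hDpos hdpos) s)).mpr h2
    rw [hL0, div_le_iff₀ hlogδ]
    exact h3
  have hS_ub : ∀ s : ℝ, 0 < s → HH F s = Δ ^ s → s ≤ B0 := by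
    intro s hs heq
    have h1 : Δ ^ s ≤ ((F.card : ℝ) - 1) * nablaF F ^ s := heq ▸ hHH_ub s hs.le
    have h2 : (Δ / nablaF F) ^ s ≤ (F.card : ℝ) - 1 := by
      rw [Real.div_rpow hDpos.le hnpos.le, div_le_iff₀ (Real.rpow_pos_of_pos hnpos s)]
      linarith
    have h3 : s * Real.log (Δ / nablaF F) ≤ Real.log ((F.card : ℝ) - 1) := by
      rw [← Real.log_rpow (div_pos hDpos hnpos)]
      exact (Real.log_le_log_iff
        (Real.rpow_pos_of_pos (div_pos hDpos hnpos) s) (by linarith)).mpr h2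
    rw [hB0, le_div_iff₀ hlogn]
    exact h3
  -- existence of a solution, via the intermediate value theorem
  have hSne : ∃ s : ℝ, 0 < s ∧ HH F s = Δ ^ s := by
    set ε := L0 / 2 with hε
    set M := max ε (B0 + 1) with hM
    have hεpos : 0 < ε := by positivity
    have hεM : ε ≤ M := le_max_left _ _
    have hgε : Δ ^ ε < HH F ε := by
      have hlt : (Δ / sep F) ^ ε < 2 := by
        calc (Δ / sep F) ^ ε < (Δ / sep F) ^ L0 :=
            (Real.rpow_lt_rpow_left_iff hratδ).mpr (by rw [hε]; linarith)
          _ = 2 := hkeyδ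
      have hmain : Δ ^ ε < 2 * sep F ^ ε := by
        have hDeq : Δ = (Δ / sep F) * sep F := (div_mul_cancel₀ _ hdpos.ne').symm
        calc Δ ^ ε = ((Δ / sep F) * sep F) ^ ε := by rw [← hDeq]
          _ = (Δ / sep F) ^ ε * sep F ^ ε :=
            Real.mul_rpow (le_of_lt (div_pos hDpos hdpos)) hdpos.le
          _ < 2 * sep F ^ ε :=
            mul_lt_mul_of_pos_right hlt (Real.rpow_pos_of_pos hdpos ε)
      exact lt_of_lt_of_le hmain (hHH_lb ε hεpos.le)
    have hgM : HH F M ≤ Δ ^ M := by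
      have hgt : (F.card : ℝ) - 1 < (Δ / nablaF F) ^ M := by
        calc (F.card : ℝ) - 1 = (Δ / nablaF F) ^ B0 := hkeyn.symm
          _ < (Δ / nablaF F) ^ (B0 + 1) :=
            (Real.rpow_lt_rpow_left_iff hratn).mpr (by linarith)
          _ ≤ (Δ / nablaF F) ^ M :=
            (Real.rpow_le_rpow_left_iff hratn).mpr (le_max_right _ _)
      have h2 : ((F.card : ℝ) - 1) * nablaF F ^ M < Δ ^ M := by
        have hDeq : Δ = (Δ / nablaF F) * nablaF F := (div_mul_cancel₀ _ hnpos.ne').symm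
        calc ((F.card : ℝ) - 1) * nablaF F ^ M
            < (Δ / nablaF F) ^ M * nablaF F ^ M :=
              mul_lt_mul_of_pos_right hgt (Real.rpow_pos_of_pos hnpos M)
          _ = ((Δ / nablaF F) * nablaF F) ^ M :=
              (Real.mul_rpow (le_of_lt (div_pos hDpos hnpos)) hnpos.le).symm
          _ = Δ ^ M := by rw [← hDeq]
      exact le_of_lt (lt_of_le_of_lt (hHH_ub M (le_trans hεpos.le hεM)) h2)
    have hcg : ContinuousOn (fun s => HH F s - Δ ^ s) (Set.Icc ε M) :=
      (hcont.sub (continuous_iff_continuousAt.mpr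
        fun b => Real.continuousAt_const_rpow hDpos.ne')).continuousOn
    have h0mem : (0 : ℝ) ∈ Set.Icc ((fun s => HH F s - Δ ^ s) M)
        ((fun s => HH F s - Δ ^ s) ε) := by
      constructor
      · simp only
        linarith
      · simp only
        linarith
    obtain ⟨s₀, hs₀mem, hs₀⟩ := intermediate_value_Icc' hεM hcg h0mem
    refine ⟨s₀, lt_of_lt_of_le hεpos hs₀mem.1, ?_⟩
    simp only at hs₀
    linarith
  obtain ⟨s₀, hs₀pos, hs₀eq⟩ := hSne
  have hdim : dimfH F = sInf {s : ℝ | 0 < s ∧ HH F s = Δ ^ s} := by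
    unfold dimfH
    rw [← hDdef]
  have hs₀mem : s₀ ∈ {s : ℝ | 0 < s ∧ HH F s = Δ ^ s} := ⟨hs₀pos, hs₀eq⟩
  constructor
  · rw [hdim]
    exact le_csInf ⟨s₀, hs₀mem⟩ fun s hs => hS_lb s hs.1 hs.2
  · rw [hdim]
    exact le_trans (csInf_le ⟨0, fun s hs => hs.1.le⟩ hs₀mem) (hS_ub s₀ hs₀pos hs₀eq)
end
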